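/- For Q > 0, σ > 0, s ∈ ℝ³, the function φ(x) = (Q/(4π ε₀ ‖x − s‖)) · erf(‖x − s‖/(√2 σ)) satisfies Poisson's equation Δφ(x) = −ρ(x)/ε₀ for x ≠ s, where ρ(x) = (Q/(σ³ (2π)^{3/2})) · exp(−‖x − s‖²/(2σ²)). -/

import Mathlib

open Real Filter MeasureTheory

noncomputable def laplacian {n : ℕ} (f : EuclideanSpace ℝ (Fin n) → ℝ)
    (x : EuclideanSpace ℝ (Fin n)) : ℝ :=
  ∑ i, fderiv ℝ (fderiv ℝ f) x (EuclideanSpace.single i 1) (EuclideanSpace.single i 1)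

noncomputable def erf (z : ℝ) : ℝ :=
  (2 / Real.sqrt Real.pi) * ∫ t in (0:ℝ)..z, Real.exp (-t ^ 2)

open Topology

lemma erf_hasDerivAt (z : ℝ) :
    HasDerivAt erf (2 / Real.sqrt π * Real.exp (-z ^ 2)) z := by
  have hc : Continuous fun t : ℝ => Real.exp (-t ^ 2) := by continuity
  have h := intervalIntegral.integral_hasDerivAt_right
    (f := fun t : ℝ => Real.exp (-t ^ 2)) (a := 0) (b := z)
    (hc.intervalIntegrable 0 z)
    hc.aestronglyMeasurable.stronglyMeasurableAtFilter hc.continuousAt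
  have := h.const_mul (2 / Real.sqrt π)
  exact this

noncomputable def Fr (C a u : ℝ) : ℝ := C / Real.sqrt u * erf (Real.sqrt u / a)

noncomputable def F1 (C a u : ℝ) : ℝ :=
  C * Real.exp (-(u / a ^ 2)) / (Real.sqrt π * a * u)
    - C * erf (Real.sqrt u / a) / (2 * Real.sqrt u ^ 3)

noncomputable def F2 (C a u : ℝ) : ℝ :=
  -(C * Real.exp (-(u / a ^ 2)) / (Real.sqrt π * a ^ 3 * u))
    - C * Real.exp (-(u / a ^ 2)) / (Real.sqrt π * a * u ^ 2)
    - C * Real.exp (-(u / a ^ 2)) / (2 * Real.sqrt π * a * u ^ 2)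
    + 3 * C * erf (Real.sqrt u / a) / (4 * Real.sqrt u ^ 5)

lemma hasDerivAt_Fr (C a : ℝ) (ha : 0 < a) {u : ℝ} (hu : 0 < u) :
    HasDerivAt (Fr C a) (F1 C a u) u := by
  have hr : 0 < Real.sqrt u := Real.sqrt_pos.2 hu
  have hs : HasDerivAt Real.sqrt (1 / (2 * Real.sqrt u)) u := Real.hasDerivAt_sqrt hu.ne'
  have hA : HasDerivAt (fun u : ℝ => C / Real.sqrt u)
      ((0 * Real.sqrt u - C * (1 / (2 * Real.sqrt u))) / Real.sqrt u ^ 2) u :=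
    (hasDerivAt_const u C).div hs hr.ne'
  have hB : HasDerivAt (fun u : ℝ => erf (Real.sqrt u / a))
      (2 / Real.sqrt π * Real.exp (-(Real.sqrt u / a) ^ 2) * (1 / (2 * Real.sqrt u) / a)) u :=
    by have := (erf_hasDerivAt (Real.sqrt u / a)).comp u (hs.div_const a); exact this
  have h := hA.mul hB
  have hexp : Real.exp (-(Real.sqrt u / a) ^ 2) = Real.exp (-(u / a ^ 2)) := by
    rw [div_pow, Real.sq_sqrt hu.le]
  rw [hexp] at h
  refine h.congr_deriv ?_
  rw [F1]
  have hru : Real.sqrt u ^ 2 = u := Real.sq_sqrt hu.le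
  have hπ : Real.sqrt π ≠ 0 := (Real.sqrt_pos.2 pi_pos).ne'
  set r := Real.sqrt u with hrdef
  rw [show u = r ^ 2 from hru.symm]
  have hπ2 : Real.sqrt π > 0 := Real.sqrt_pos.2 pi_pos
  field_simp [F1, hr.ne', ha.ne']
  ring

lemma hasDerivAt_F1 (C a : ℝ) (ha : 0 < a) {u : ℝ} (hu : 0 < u) :
    HasDerivAt (F1 C a) (F2 C a u) u := by
  have hr : 0 < Real.sqrt u := Real.sqrt_pos.2 hu
  have hs : HasDerivAt Real.sqrt (1 / (2 * Real.sqrt u)) u := Real.hasDerivAt_sqrt hu.ne'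
  have hπ2 : (0:ℝ) < Real.sqrt π := Real.sqrt_pos.2 pi_pos
  -- derivative of the exponential numerator
  have hexp0 : HasDerivAt (fun u : ℝ => -(u / a ^ 2)) (-(1 / a ^ 2)) u := by
    exact ((hasDerivAt_id u).div_const (a ^ 2)).neg
  have hN1 : HasDerivAt (fun u : ℝ => C * Real.exp (-(u / a ^ 2)))
      (C * (Real.exp (-(u / a ^ 2)) * -(1 / a ^ 2))) u :=
    hexp0.exp.const_mul C
  have hD1 : HasDerivAt (fun u : ℝ => Real.sqrt π * a * u) (Real.sqrt π * a) u := by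
    simpa using (hasDerivAt_id u).const_mul (Real.sqrt π * a)
  have hD1ne : Real.sqrt π * a * u ≠ 0 := by positivity
  have hT1 := hN1.div hD1 hD1ne
  -- derivative of the erf term
  have hB : HasDerivAt (fun u : ℝ => C * erf (Real.sqrt u / a))
      (C * (2 / Real.sqrt π * Real.exp (-(Real.sqrt u / a) ^ 2) * (1 / (2 * Real.sqrt u) / a))) u :=
    by have := (((erf_hasDerivAt (Real.sqrt u / a)).comp u (hs.div_const a))); exact this.const_mul C
  have hD2 : HasDerivAt (fun u : ℝ => 2 * Real.sqrt u ^ 3)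
      (2 * (3 * Real.sqrt u ^ 2 * (1 / (2 * Real.sqrt u)))) u := by
    simpa using (hs.pow 3).const_mul 2
  have hD2ne : 2 * Real.sqrt u ^ 3 ≠ 0 := by positivity
  have hT2 := hB.div hD2 hD2ne
  have h := hT1.sub hT2
  have hexp : Real.exp (-(Real.sqrt u / a) ^ 2) = Real.exp (-(u / a ^ 2)) := by
    rw [div_pow, Real.sq_sqrt hu.le]
  rw [hexp] at h
  have hru : Real.sqrt u ^ 2 = u := Real.sq_sqrt hu.le
  refine h.congr_deriv ?_
  rw [F2]
  set r := Real.sqrt u with hrdef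
  rw [show u = r ^ 2 from hru.symm]
  field_simp [F1, F2, hr.ne', ha.ne']
  ring

lemma combine_F (C a : ℝ) (ha : 0 < a) {r : ℝ} (hr : 0 < r) :
    6 * F1 C a (r ^ 2) + 4 * F2 C a (r ^ 2) * r ^ 2
      = -(4 * C * Real.exp (-(r ^ 2 / a ^ 2)) / (Real.sqrt π * a ^ 3)) := by
  have hπ2 : (0:ℝ) < Real.sqrt π := Real.sqrt_pos.2 pi_pos
  rw [F1, F2, Real.sqrt_sq hr.le]
  field_simp
  ring

lemma laplacian_radial (C a : ℝ) (ha : 0 < a) (s x : EuclideanSpace ℝ (Fin 3)) (hx : x ≠ s) :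
    laplacian (fun y => Fr C a (‖y - s‖ ^ 2)) x
      = 6 * F1 C a (‖x - s‖ ^ 2) + 4 * F2 C a (‖x - s‖ ^ 2) * ‖x - s‖ ^ 2 := by
  have hus : ∀ y : EuclideanSpace ℝ (Fin 3), HasFDerivAt (fun y : EuclideanSpace ℝ (Fin 3) => ‖y - s‖ ^ 2)
      ((2:ℕ) • innerSL ℝ (y - s)) y := by
    intro y
    have h := ((hasFDerivAt_id y).sub_const s).norm_sq
    simpa using h
  set f : EuclideanSpace ℝ (Fin 3) → ℝ := fun y => Fr C a (‖y - s‖ ^ 2) with hfdef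
  set A : EuclideanSpace ℝ (Fin 3) → (EuclideanSpace ℝ (Fin 3) →L[ℝ] ℝ) :=
    fun y => (2 * F1 C a (‖y - s‖ ^ 2)) • innerSL ℝ (y - s) with hAdef
  set T : EuclideanSpace ℝ (Fin 3) →L[ℝ] (EuclideanSpace ℝ (Fin 3) →L[ℝ] ℝ) :=
    innerSL ℝ with hTdef
  have hposx : 0 < ‖x - s‖ ^ 2 :=
    pow_pos (norm_pos_iff.2 (sub_ne_zero.2 hx)) 2
  have step1 : ∀ y : EuclideanSpace ℝ (Fin 3), y ≠ s → HasFDerivAt f (A y) y := by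
    intro y hy
    have hpos : 0 < ‖y - s‖ ^ 2 :=
      pow_pos (norm_pos_iff.2 (sub_ne_zero.2 hy)) 2
    have h := (hasDerivAt_Fr C a ha hpos).comp_hasFDerivAt y (hus y)
    have heq : F1 C a (‖y - s‖ ^ 2) • ((2:ℕ) • innerSL ℝ (y - s)) = A y := by
      ext v
      simp [hAdef, hTdef, innerSL_apply_apply, PiLp.inner_apply]
      ring
    rw [heq] at h
    exact h
  have hmem : {y : EuclideanSpace ℝ (Fin 3) | y ≠ s} ∈ 𝓝 x := isOpen_ne.mem_nhds hx
  have hev : fderiv ℝ f =ᶠ[𝓝 x] A :=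
    Filter.eventually_of_mem hmem fun y hy => (step1 y hy).fderiv
  -- derivative of A at x
  have hc : HasFDerivAt (fun y : EuclideanSpace ℝ (Fin 3) => 2 * F1 C a (‖y - s‖ ^ 2))
      ((2:ℝ) • (F2 C a (‖x - s‖ ^ 2) • ((2:ℕ) • innerSL ℝ (x - s)))) x :=
    by have := (hasDerivAt_F1 C a ha hposx).comp_hasFDerivAt x (hus x); exact this.const_mul 2
  have hL : HasFDerivAt (fun y : EuclideanSpace ℝ (Fin 3) => innerSL ℝ (y - s)) T x := by
    have h := T.hasFDerivAt.comp x ((hasFDerivAt_id x).sub_const s)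
    rw [ContinuousLinearMap.comp_id] at h
    exact h
  have hA' : HasFDerivAt A
      ((2 * F1 C a (‖x - s‖ ^ 2)) • T
        + ((2:ℝ) • (F2 C a (‖x - s‖ ^ 2) • ((2:ℕ) • innerSL ℝ (x - s)))).smulRight
            (innerSL ℝ (x - s))) x := hc.smul hL
  have hfd := hev.fderiv_eq.trans hA'.fderiv
  rw [laplacian]
  have happ : ∀ i : Fin 3,
      (fderiv ℝ (fderiv ℝ f) x) (EuclideanSpace.single i 1) (EuclideanSpace.single i 1)
        = 2 * F1 C a (‖x - s‖ ^ 2) + 4 * F2 C a (‖x - s‖ ^ 2) * ((x - s) i) ^ 2 := by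
    intro i
    rw [hfd]
    simp [hTdef, innerSL_apply_apply, EuclideanSpace.inner_single_left, EuclideanSpace.inner_single_right,
      EuclideanSpace.single_apply, real_inner_comm]
    rw [show ((innerSL ℝ) (EuclideanSpace.single i 1 : EuclideanSpace ℝ (Fin 3))) (EuclideanSpace.single i 1) = (1:ℝ) by
      simp [innerSL_apply_apply, EuclideanSpace.inner_single_left]]
    ring
  rw [Finset.sum_congr rfl fun i _ => happ i]
  rw [Finset.sum_add_distrib, Finset.sum_const, ← Finset.mul_sum]
  have hnorm : ∑ i : Fin 3, ((x - s) i) ^ 2 = ‖x - s‖ ^ 2 := by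
    rw [EuclideanSpace.norm_eq, Real.sq_sqrt (by positivity)]
    simp [sq_abs]
  rw [hnorm]
  simp
  ring

theorem potential_solves_poisson (Q σ ε₀ : ℝ) (hQ : 0 < Q) (hσ : 0 < σ)
    (hε : 0 < ε₀) (s : EuclideanSpace ℝ (Fin 3)) :
    ∀ x : EuclideanSpace ℝ (Fin 3), x ≠ s →
      laplacian
        (fun y : EuclideanSpace ℝ (Fin 3) =>
          Q / (4 * π * ε₀ * ‖y - s‖) * erf (‖y - s‖ / (Real.sqrt 2 * σ))) x
      = -(Q / (σ ^ 3 * (2 * π) ^ ((3 : ℝ) / 2)) *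
          Real.exp (-‖x - s‖ ^ 2 / (2 * σ ^ 2))) / ε₀ := by
  intro x hx
  have h2 : (0:ℝ) < Real.sqrt 2 := Real.sqrt_pos.2 (by norm_num)
  have hπ : (0:ℝ) < Real.sqrt π := Real.sqrt_pos.2 pi_pos
  have ha : 0 < Real.sqrt 2 * σ := mul_pos h2 hσ
  have hr : 0 < ‖x - s‖ := norm_pos_iff.2 (sub_ne_zero.2 hx)
  have hfun : (fun y : EuclideanSpace ℝ (Fin 3) =>
      Q / (4 * π * ε₀ * ‖y - s‖) * erf (‖y - s‖ / (Real.sqrt 2 * σ)))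
      = fun y => Fr (Q / (4 * π * ε₀)) (Real.sqrt 2 * σ) (‖y - s‖ ^ 2) := by
    funext y
    rw [Fr, Real.sqrt_sq (norm_nonneg _), ← div_div]
  rw [hfun, laplacian_radial _ _ ha s x hx, combine_F _ _ ha hr]
  have ha2 : (Real.sqrt 2 * σ) ^ 2 = 2 * σ ^ 2 := by
    rw [mul_pow, Real.sq_sqrt (by norm_num : (0:ℝ) ≤ 2)]
  have ha3 : (Real.sqrt 2 * σ) ^ 3 = 2 * Real.sqrt 2 * σ ^ 3 := by
    rw [mul_pow, pow_succ, Real.sq_sqrt (by norm_num : (0:ℝ) ≤ 2)]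
  have h32 : (2 * π : ℝ) ^ ((3:ℝ) / 2) = 2 * π * (Real.sqrt 2 * Real.sqrt π) := by
    rw [show (3:ℝ)/2 = 1 + 1/2 by norm_num, Real.rpow_add (by positivity), Real.rpow_one,
      ← Real.sqrt_eq_rpow, Real.sqrt_mul (by norm_num : (0:ℝ) ≤ 2)]
  rw [ha2, ha3, h32, neg_div]
  rw [show -(‖x - s‖ ^ 2 / (2 * σ ^ 2)) = -‖x - s‖ ^ 2 / (2 * σ ^ 2) from neg_div _ _ |>.symm]
  have hppi : Real.sqrt π * Real.sqrt π = π := Real.mul_self_sqrt pi_pos.le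
  have h22 : Real.sqrt 2 * Real.sqrt 2 = 2 := Real.mul_self_sqrt (by norm_num)
  field_simp
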